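/- Every nonzero simple left A_{n,q}-module has ℂ-dimension N^n, and any two nonzero simple left A_{n,q}-modules are isomorphic. -/

import Mathlib

set_option linter.unusedSectionVars false

set_option linter.unusedSectionVars false
noncomputable section
namespace Stmt2Aux

section Ops
variable (n N : ℕ) [NeZero N]

abbrev I := Fin n → ZMod N
abbrev V := (Fin n → ZMod N) → ℂ

def diag (d : I n N → ℂ) : Module.End ℂ (V n N) where
  toFun f := fun a => d a * f a
  map_add' f g := by funext a; simp [mul_add]
  map_smul' c f := by funext a; simp [smul_eq_mul]; ring

def shiftOp (c : I n N) : Module.End ℂ (V n N) where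
  toFun f := fun a => f (a + c)
  map_add' f g := by funext a; simp
  map_smul' c f := by funext a; simp

@[simp] lemma diag_apply (d : I n N → ℂ) (f : V n N) (a : I n N) :
    diag n N d f a = d a * f a := rfl

@[simp] lemma shiftOp_apply (c : I n N) (f : V n N) (a : I n N) :
    shiftOp n N c f a = f (a + c) := rfl

lemma diag_mul (d e : I n N → ℂ) :
    diag n N d * diag n N e = diag n N (fun a => d a * e a) :=
  LinearMap.ext fun f => funext fun a => by
    simp [Module.End.mul_apply, mul_assoc]

@[simp] lemma diag_one : diag n N (fun _ => 1) = 1 :=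
  LinearMap.ext fun f => funext fun a => by simp

lemma shiftOp_mul (c c' : I n N) :
    shiftOp n N c * shiftOp n N c' = shiftOp n N (c + c') :=
  LinearMap.ext fun f => funext fun a => by
    simp [Module.End.mul_apply, add_assoc]

@[simp] lemma shiftOp_zero : shiftOp n N 0 = 1 :=
  LinearMap.ext fun f => funext fun a => by simp

lemma diag_pow (d : I n N → ℂ) (m : ℕ) :
    diag n N d ^ m = diag n N (fun a => d a ^ m) := by
  induction m with
  | zero => simp
  | succ k ih =>
    rw [pow_succ, ih, diag_mul]
    exact congrArg _ (funext fun a => (pow_succ _ _).symm)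

lemma shiftOp_pow (c : I n N) (m : ℕ) :
    shiftOp n N c ^ m = shiftOp n N (m • c) := by
  induction m with
  | zero => simp
  | succ k ih => rw [pow_succ, ih, shiftOp_mul, succ_nsmul]

lemma shiftOp_mul_diag (c : I n N) (d : I n N → ℂ) :
    shiftOp n N c * diag n N d = diag n N (fun a => d (a + c)) * shiftOp n N c :=
  LinearMap.ext fun f => funext fun a => by
    simp [Module.End.mul_apply]

lemma diag_smul (c : ℂ) (d : I n N → ℂ) :
    diag n N (fun a => c * d a) = c • diag n N d :=
  LinearMap.ext fun f => funext fun a => by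
    simp [smul_eq_mul]; ring

lemma diag_sum {κ : Type*} (s : Finset κ) (d : κ → I n N → ℂ) :
    ∑ k ∈ s, diag n N (d k) = diag n N (fun a => ∑ k ∈ s, d k a) := by
  classical
  induction s using Finset.induction with
  | empty =>
    refine Eq.symm (LinearMap.ext fun f => funext fun a => ?_)
    simp
  | @insert _ _ hks ih =>
    rw [Finset.sum_insert hks, ih]
    refine LinearMap.ext fun f => funext fun a => ?_
    simp [Finset.sum_insert hks, add_mul]

end Ops

section Char
variable {N : ℕ} [NeZero N] {q : ℂ}

def χ (q : ℂ) (m : ZMod N) : ℂ := q ^ m.val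

lemma qpow_mod (hqN : q ^ N = 1) (m : ℕ) : q ^ (m % N) = q ^ m := by
  conv_rhs => rw [← Nat.mod_add_div m N, pow_add, pow_mul, hqN, one_pow, mul_one]

lemma χ_add (hqN : q ^ N = 1) (x y : ZMod N) : χ q (x + y) = χ q x * χ q y := by
  rw [χ, χ, χ, ZMod.val_add, qpow_mod hqN, pow_add]

lemma χ_mul_pow (hqN : q ^ N = 1) (k c : ZMod N) : χ q (k * c) = χ q c ^ k.val := by
  rw [χ, χ, ZMod.val_mul, qpow_mod hqN, pow_mul']

@[simp] lemma χ_zero : χ q (0 : ZMod N) = 1 := by simp [χ]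

lemma χ_pow_N (hqN : q ^ N = 1) (x : ZMod N) : χ q x ^ N = 1 := by
  rw [χ, ← pow_mul, mul_comm, pow_mul, hqN, one_pow]

lemma χ_ne_zero (hqN : q ^ N = 1) (x : ZMod N) : χ q x ≠ 0 := by
  intro h
  have h2 := χ_pow_N hqN x
  rw [h, zero_pow (NeZero.ne N)] at h2
  exact zero_ne_one h2

lemma χ_one (hq : IsPrimitiveRoot q N) : χ (N := N) q 1 = q := by
  rcases eq_or_lt_of_le (Nat.one_le_iff_ne_zero.mpr (NeZero.ne N)) with h | h
  · have hq1 : q = 1 := by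
      have := hq.pow_eq_one
      rwa [← h, pow_one] at this
    simp [χ, hq1]
  · rw [χ, ZMod.val_one_eq_one_mod]
    rw [Nat.mod_eq_of_lt h, pow_one]

lemma sum_zmod {β : Type*} [AddCommMonoid β] (f : ℕ → β) :
    ∑ k : ZMod N, f k.val = ∑ j ∈ Finset.range N, f j := by
  refine Finset.sum_bij' (fun k _ => k.val) (fun j _ => (j : ZMod N)) ?_ ?_ ?_ ?_ ?_
  · intro k _; exact Finset.mem_range.mpr k.val_lt
  · intro j _; exact Finset.mem_univ _
  · intro k _; exact ZMod.natCast_rightInverse k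
  · intro j hj; exact ZMod.val_cast_of_lt (Finset.mem_range.mp hj)
  · intro k _; rfl

lemma char_sum (hq : IsPrimitiveRoot q N) (c : ZMod N) :
    ∑ k : ZMod N, χ q (k * c) = if c = 0 then (N : ℂ) else 0 := by
  have hqN : q ^ N = 1 := hq.pow_eq_one
  by_cases hc : c = 0
  · simp [hc, ZMod.card]
  · rw [if_neg hc]
    have h1 : ∑ k : ZMod N, χ q (k * c) = ∑ j ∈ Finset.range N, χ q c ^ j := by
      rw [← sum_zmod (fun j => χ q c ^ j)]
      exact Finset.sum_congr rfl fun k _ => χ_mul_pow hqN k c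
    rw [h1, geom_sum_eq, χ_pow_N hqN, sub_self, zero_div]
    rw [χ]
    refine hq.pow_ne_one_of_pos_of_lt ?_ c.val_lt
    exact fun h => hc ((ZMod.val_eq_zero c).mp h)

end Char

section XYops
variable (n N : ℕ) [NeZero N] (q : ℂ)

def Xop (i : Fin n) : Module.End ℂ (V n N) := diag n N (fun a => χ q (a i))
def Yop (i : Fin n) : Module.End ℂ (V n N) := shiftOp n N (Pi.single i 1)

lemma opXX (i j : Fin n) : Xop n N q i * Xop n N q j = Xop n N q j * Xop n N q i := by
  rw [Xop, Xop, diag_mul, diag_mul]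
  exact congrArg _ (funext fun a => mul_comm _ _)

lemma opYY (i j : Fin n) : Yop n N i * Yop n N j = Yop n N j * Yop n N i := by
  rw [Yop, Yop, shiftOp_mul, shiftOp_mul, add_comm]

lemma opXYne (i j : Fin n) (h : i ≠ j) :
    Xop n N q i * Yop n N j = Yop n N j * Xop n N q i := by
  rw [Xop, Yop, shiftOp_mul_diag]
  congr 2
  funext a
  simp [Pi.single_apply, (Ne.symm h)]

lemma opXY (hq : IsPrimitiveRoot q N) (i : Fin n) :
    Xop n N q i * Yop n N i = q⁻¹ • (Yop n N i * Xop n N q i) := by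
  have hqN : q ^ N = 1 := hq.pow_eq_one
  have hq0 : q ≠ 0 := fun h => by
    rw [h, zero_pow (NeZero.ne N)] at hqN; exact zero_ne_one hqN
  rw [Xop, Yop, shiftOp_mul_diag]
  have h1 : (fun a : I n N => χ q ((a + (Pi.single i 1 : I n N)) i)) = fun a => q * χ q (a i) := by
    funext a
    rw [Pi.add_apply, Pi.single_eq_same, χ_add hqN, χ_one hq, mul_comm]
  rw [h1, diag_smul, smul_mul_assoc, smul_smul, inv_mul_cancel₀ hq0, one_smul]

lemma opXord (hq : IsPrimitiveRoot q N) (i : Fin n) : Xop n N q i ^ N = 1 := by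
  rw [Xop, diag_pow]
  have h1 : (fun a : I n N => χ q (a i) ^ N) = fun _ => 1 :=
    funext fun a => χ_pow_N hq.pow_eq_one _
  rw [h1, diag_one]

lemma opYord (i : Fin n) : Yop n N i ^ N = 1 := by
  rw [Yop, shiftOp_pow]
  have h1 : N • (Pi.single i 1 : I n N) = 0 := by
    ext j
    rcases eq_or_ne j i with rfl | h
    · simp [ZMod.natCast_self]
    · simp [Pi.single_eq_of_ne h]
  rw [h1, shiftOp_zero]

end XYops
end Stmt2Aux


noncomputable section

namespace Stmt2

/-- The generator `X_i` of the free algebra on `X_1,…,X_n,Y_1,…,Y_n`. -/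
abbrev Xg (n : ℕ) (i : Fin n) : FreeAlgebra ℂ (Fin n ⊕ Fin n) :=
  FreeAlgebra.ι ℂ (Sum.inl i)

/-- The generator `Y_i` of the free algebra on `X_1,…,X_n,Y_1,…,Y_n`. -/
abbrev Yg (n : ℕ) (i : Fin n) : FreeAlgebra ℂ (Fin n ⊕ Fin n) :=
  FreeAlgebra.ι ℂ (Sum.inr i)

/-- The defining relations of the rank-`n` Weyl algebra (noncommutative `n`-torus)
`A_{n,q}` at the parameter `q`, with all generators cyclic of order `N`:
`X_iX_j = X_jX_i`, `Y_iY_j = Y_jY_i`, `X_iY_j = Y_jX_i (i ≠ j)`,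
`X_iY_i = q⁻¹·Y_iX_i`, `X_i^N = 1 = Y_i^N`. -/
inductive Rel (n N : ℕ) (q : ℂ) :
    FreeAlgebra ℂ (Fin n ⊕ Fin n) → FreeAlgebra ℂ (Fin n ⊕ Fin n) → Prop
  | XX (i j : Fin n) : Rel n N q (Xg n i * Xg n j) (Xg n j * Xg n i)
  | YY (i j : Fin n) : Rel n N q (Yg n i * Yg n j) (Yg n j * Yg n i)
  | XYne (i j : Fin n) (h : i ≠ j) : Rel n N q (Xg n i * Yg n j) (Yg n j * Xg n i)
  | XY (i : Fin n) : Rel n N q (Xg n i * Yg n i) (q⁻¹ • (Yg n i * Xg n i))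
  | Xord (i : Fin n) : Rel n N q (Xg n i ^ N) 1
  | Yord (i : Fin n) : Rel n N q (Yg n i ^ N) 1

/-- The rank-`n` Weyl algebra `A_{n,q}` at a root of unity with cyclic generators. -/
abbrev WeylAlg (n N : ℕ) (q : ℂ) := RingQuot (Rel n N q)

section Helpers
open Stmt2Aux

variable (n N : ℕ) [NeZero N] (q : ℂ) (hq : IsPrimitiveRoot q N)

/-- The representation on `V`. -/
def toEnd : WeylAlg n N q →ₐ[ℂ] Module.End ℂ (V n N) :=
  RingQuot.liftAlgHom ℂ ⟨FreeAlgebra.lift ℂ (Sum.elim (Xop n N q) (Yop n N)), by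
    intro x y h
    induction h with
    | XX i j => simp only [map_mul, FreeAlgebra.lift_ι_apply, Sum.elim_inl]; exact opXX n N q i j
    | YY i j => simp only [map_mul, FreeAlgebra.lift_ι_apply, Sum.elim_inr]; exact opYY n N i j
    | XYne i j hij =>
        simp only [map_mul, FreeAlgebra.lift_ι_apply, Sum.elim_inl, Sum.elim_inr]
        exact opXYne n N q i j hij
    | XY i =>
        simp only [map_mul, map_smul, FreeAlgebra.lift_ι_apply, Sum.elim_inl, Sum.elim_inr]
        exact opXY n N q hq i
    | Xord i =>
        simp only [map_pow, map_one, FreeAlgebra.lift_ι_apply, Sum.elim_inl]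
        exact opXord n N q hq i
    | Yord i =>
        simp only [map_pow, map_one, FreeAlgebra.lift_ι_apply, Sum.elim_inr]
        exact opYord n N i⟩

/-- images of the generators in the quotient -/
def xw (i : Fin n) : WeylAlg n N q := RingQuot.mkAlgHom ℂ (Rel n N q) (Xg n i)
def yw (i : Fin n) : WeylAlg n N q := RingQuot.mkAlgHom ℂ (Rel n N q) (Yg n i)

@[simp] lemma toEnd_xw (i : Fin n) : toEnd n N q hq (xw n N q i) = Xop n N q i := by
  rw [xw, toEnd, RingQuot.liftAlgHom_mkAlgHom_apply]
  simp [FreeAlgebra.lift_ι_apply]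

@[simp] lemma toEnd_yw (i : Fin n) : toEnd n N q hq (yw n N q i) = Yop n N i := by
  rw [yw, toEnd, RingQuot.liftAlgHom_mkAlgHom_apply]
  simp [FreeAlgebra.lift_ι_apply]

end Helpers

section Helpers
open Stmt2Aux

variable (n N : ℕ) [NeZero N] (q : ℂ) (hq : IsPrimitiveRoot q N)

lemma Xop_mem (i : Fin n) : Xop n N q i ∈ (toEnd n N q hq).range :=
  ⟨xw n N q i, toEnd_xw n N q hq i⟩

lemma Yop_mem (i : Fin n) : Yop n N i ∈ (toEnd n N q hq).range :=
  ⟨yw n N q i, toEnd_yw n N q hq i⟩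

lemma factor_mem (i : Fin n) (b : ZMod N) :
    diag n N (fun a => if a i = b then 1 else 0) ∈ (toEnd n N q hq).range := by
  have hqN : q ^ N = 1 := hq.pow_eq_one
  have hN0 : (N : ℂ) ≠ 0 := Nat.cast_ne_zero.mpr (NeZero.ne N)
  have key : diag n N (fun a => if a i = b then 1 else 0) =
      (N : ℂ)⁻¹ • ∑ k : ZMod N, (χ q (k * b))⁻¹ • (Xop n N q i ^ k.val) := by
    have h1 : ∀ k : ZMod N, (χ q (k * b))⁻¹ • (Xop n N q i ^ k.val) =
        diag n N (fun a => (χ q (k * b))⁻¹ * χ q (k * a i)) := by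
      intro k
      rw [Xop, diag_pow, ← diag_smul]
      congr 1
      funext a
      rw [← χ_mul_pow hqN]
    rw [Finset.sum_congr rfl (fun k _ => h1 k), diag_sum, ← diag_smul]
    congr 1
    funext a
    have h2 : ∀ k : ZMod N, (χ q (k * b))⁻¹ * χ q (k * a i) = χ q (k * (a i - b)) := by
      intro k
      have h3 : χ q (k * (a i - b)) * χ q (k * b) = χ q (k * a i) := by
        rw [← χ_add hqN]
        congr 1
        ring
      field_simp [χ_ne_zero hqN]
      linear_combination -h3
    rw [Finset.sum_congr rfl (fun k _ => h2 k), char_sum hq]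
    rcases eq_or_ne (a i) b with h | h
    · rw [if_pos h, if_pos (by rw [h, sub_self]), inv_mul_cancel₀ hN0]
    · rw [if_neg h, if_neg (fun hc => h (sub_eq_zero.mp hc)), mul_zero]
  rw [key]
  exact Subalgebra.smul_mem _ (Subalgebra.sum_mem _ fun k _ =>
    Subalgebra.smul_mem _ (Subalgebra.pow_mem _ (Xop_mem n N q hq i) _) _) _

lemma projList_mem (b : I n N) (l : List (Fin n)) :
    diag n N (fun a => if ∀ i ∈ l, a i = b i then 1 else 0) ∈ (toEnd n N q hq).range := by
  induction l with
  | nil =>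
    have : (fun a : I n N => if ∀ i ∈ ([] : List (Fin n)), a i = b i then 1 else (0:ℂ)) =
        fun _ => 1 := by
      funext a; simp
    rw [this, diag_one]
    exact Subalgebra.one_mem _
  | cons i l ih =>
    have key : diag n N (fun a => if ∀ j ∈ (i :: l), a j = b j then 1 else 0) =
        diag n N (fun a => if a i = b i then 1 else 0) *
        diag n N (fun a => if ∀ j ∈ l, a j = b j then 1 else 0) := by
      rw [diag_mul]
      congr 1
      funext a
      by_cases h1 : a i = b i <;> by_cases h2 : ∀ j ∈ l, a j = b j <;>
        simp [h1, h2]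
    rw [key]
    exact Subalgebra.mul_mem _ (factor_mem n N q hq i (b i)) ih

lemma proj_mem (b : I n N) :
    diag n N (fun a => if a = b then 1 else 0) ∈ (toEnd n N q hq).range := by
  have h : (fun a : I n N => if a = b then (1:ℂ) else 0) =
      fun a => if ∀ i ∈ List.finRange n, a i = b i then 1 else 0 := by
    funext a
    congr 1
    simp [funext_iff]
  rw [h]
  exact projList_mem n N q hq b _

lemma single_smul_eq (i : Fin n) (m : ℕ) :
    m • (Pi.single i 1 : I n N) = Pi.single i (m : ZMod N) := by
  ext j
  rcases eq_or_ne j i with rfl | h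
  · simp [nsmul_eq_mul]
  · simp [Pi.single_eq_of_ne h]

lemma shift_single_mem (i : Fin n) (m : ZMod N) :
    shiftOp n N (Pi.single i m) ∈ (toEnd n N q hq).range := by
  have h : shiftOp n N (Pi.single i m) = Yop n N i ^ m.val := by
    rw [Yop, shiftOp_pow, single_smul_eq, ZMod.natCast_rightInverse m]
  rw [h]
  exact Subalgebra.pow_mem _ (Yop_mem n N q hq i) _

lemma shift_mem (c : I n N) :
    shiftOp n N c ∈ (toEnd n N q hq).range := by
  have main : ∀ l : List (Fin n), l.Nodup →
      shiftOp n N (fun j => if j ∈ l then c j else 0) ∈ (toEnd n N q hq).range := by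
    intro l hl
    induction l with
    | nil =>
      have h : (fun j : Fin n => if j ∈ ([] : List (Fin n)) then c j else 0) = 0 := by
        funext j; simp
      rw [h, shiftOp_zero]
      exact Subalgebra.one_mem _
    | cons i l ih =>
      rw [List.nodup_cons] at hl
      have h : (fun j : Fin n => if j ∈ (i :: l) then c j else 0) =
          Pi.single i (c i) + fun j => if j ∈ l then c j else 0 := by
        funext j
        rcases eq_or_ne j i with rfl | hj
        · simp [hl.1]
        · simp [Pi.single_eq_of_ne hj, hj]
      rw [h, ← shiftOp_mul]
      exact Subalgebra.mul_mem _ (shift_single_mem n N q hq i (c i)) (ih hl.2)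
  have h : c = fun j => if j ∈ List.finRange n then c j else 0 := by
    funext j; simp
  rw [h]
  exact main _ (List.nodup_finRange n)

end Helpers

section Helpers
open Stmt2Aux

variable (n N : ℕ) [NeZero N] (q : ℂ) (hq : IsPrimitiveRoot q N)

/-- rank one operator `f ↦ f b • v` -/
def rankOne (v : V n N) (b : I n N) : Module.End ℂ (V n N) :=
  (LinearMap.proj b : V n N →ₗ[ℂ] ℂ).smulRight v

@[simp] lemma rankOne_apply (v : V n N) (b : I n N) (f : V n N) (x : I n N) :
    rankOne n N v b f x = f b * v x := by
  simp [rankOne, LinearMap.smulRight_apply, smul_eq_mul, mul_comm]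

lemma E_mem (a b : I n N) :
    rankOne n N (Pi.single a 1) b ∈ (toEnd n N q hq).range := by
  have key : rankOne n N (Pi.single a 1) b =
      shiftOp n N (b - a) * diag n N (fun x => if x = b then 1 else 0) := by
    refine LinearMap.ext fun f => funext fun x => ?_
    rw [rankOne_apply, Module.End.mul_apply, shiftOp_apply, diag_apply]
    by_cases h : x = a
    · subst h
      have hx : x + (b - x) = b := by rw [add_comm, sub_add_cancel]
      rw [if_pos hx, hx, one_mul, Pi.single_eq_same, mul_one]
    · rw [Pi.single_eq_of_ne h, mul_zero, if_neg, zero_mul]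
      intro hc
      apply h
      have := congrArg (fun z => z - (b - a)) hc
      simpa using this
  rw [key]
  exact Subalgebra.mul_mem _ (shift_mem n N q hq _) (proj_mem n N q hq b)

lemma rankOne_mem (v : V n N) (b : I n N) :
    rankOne n N v b ∈ (toEnd n N q hq).range := by
  have key : rankOne n N v b = ∑ a : I n N, v a • rankOne n N (Pi.single a 1) b := by
    refine LinearMap.ext fun f => funext fun x => ?_
    rw [rankOne_apply]
    have : (∑ a : I n N, v a • rankOne n N (Pi.single a 1) b) f x
        = ∑ a : I n N, v a * (f b * (Pi.single a 1 : V n N) x) := by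
      simp [LinearMap.sum_apply, Finset.sum_apply]
    rw [this]
    have : ∀ a : I n N, v a * (f b * (Pi.single a 1 : V n N) x) =
        if x = a then f b * v x else 0 := by
      intro a
      rcases eq_or_ne x a with rfl | h
      · simp [mul_comm]
      · simp [Pi.single_eq_of_ne (Ne.symm h), h]
    rw [Finset.sum_congr rfl (fun a _ => this a), Finset.sum_ite_eq]
    simp
  rw [key]
  exact Subalgebra.sum_mem _ fun a _ => Subalgebra.smul_mem _ (E_mem n N q hq a _) _

lemma end_eq_sum_rankOne (f : Module.End ℂ (V n N)) :
    f = ∑ b : I n N, rankOne n N (f (Pi.single b 1)) b := by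
  refine LinearMap.ext fun g => funext fun x => ?_
  have hg : g = ∑ b : I n N, g b • (Pi.single b 1 : V n N) := by
    funext y
    rw [Finset.sum_apply]
    have : ∀ b : I n N, (g b • (Pi.single b 1 : V n N)) y =
        if y = b then g y else 0 := by
      intro b
      rcases eq_or_ne y b with rfl | h
      · simp
      · simp [Pi.single_eq_of_ne (Ne.symm h), h]
    rw [Finset.sum_congr rfl (fun b _ => this b), Finset.sum_ite_eq]
    simp
  conv_lhs => rw [hg]
  rw [map_sum]
  simp [Finset.sum_apply, rankOne_apply, smul_eq_mul]

lemma toEnd_surjective : Function.Surjective (toEnd n N q hq) := by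
  intro f
  have hf : f ∈ (toEnd n N q hq).range := by
    rw [end_eq_sum_rankOne n N f]
    exact Subalgebra.sum_mem _ fun b _ => rankOne_mem n N q hq _ b
  exact hf

end Helpers

section Helpers
open Stmt2Aux

variable (n N : ℕ) [NeZero N] (q : ℂ) (hq : IsPrimitiveRoot q N)

lemma rXX (i j : Fin n) : xw n N q i * xw n N q j = xw n N q j * xw n N q i := by
  rw [xw, xw, ← map_mul, ← map_mul]
  exact RingQuot.mkAlgHom_rel ℂ (Rel.XX i j)

lemma rYY (i j : Fin n) : yw n N q i * yw n N q j = yw n N q j * yw n N q i := by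
  rw [yw, yw, ← map_mul, ← map_mul]
  exact RingQuot.mkAlgHom_rel ℂ (Rel.YY i j)

lemma rXYne (i j : Fin n) (h : i ≠ j) :
    xw n N q i * yw n N q j = yw n N q j * xw n N q i := by
  rw [xw, yw, ← map_mul, ← map_mul]
  exact RingQuot.mkAlgHom_rel ℂ (Rel.XYne i j h)

lemma rXY (i : Fin n) :
    xw n N q i * yw n N q i = q⁻¹ • (yw n N q i * xw n N q i) := by
  rw [xw, yw, ← map_mul, ← map_mul, ← map_smul]
  exact RingQuot.mkAlgHom_rel ℂ (Rel.XY i)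

lemma rXord (i : Fin n) : xw n N q i ^ N = 1 := by
  rw [xw, ← map_pow, ← map_one (RingQuot.mkAlgHom ℂ (Rel n N q))]
  exact RingQuot.mkAlgHom_rel ℂ (Rel.Xord i)

lemma rYord (i : Fin n) : yw n N q i ^ N = 1 := by
  rw [yw, ← map_pow, ← map_one (RingQuot.mkAlgHom ℂ (Rel n N q))]
  exact RingQuot.mkAlgHom_rel ℂ (Rel.Yord i)

lemma xw_pow_mod (i : Fin n) (m : ℕ) : xw n N q i ^ (m % N) = xw n N q i ^ m := by
  conv_rhs => rw [← Nat.mod_add_div m N, pow_add, pow_mul, rXord, one_pow, mul_one]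

lemma yw_pow_mod (i : Fin n) (m : ℕ) : yw n N q i ^ (m % N) = yw n N q i ^ m := by
  conv_rhs => rw [← Nat.mod_add_div m N, pow_add, pow_mul, rYord, one_pow, mul_one]

lemma x_ypow (i : Fin n) (m : ℕ) :
    xw n N q i * yw n N q i ^ m = (q⁻¹) ^ m • (yw n N q i ^ m * xw n N q i) := by
  induction m with
  | zero => simp
  | succ k ih =>
    rw [pow_succ, ← mul_assoc, ih, smul_mul_assoc, mul_assoc, rXY, mul_smul_comm,
      smul_smul, pow_succ, mul_assoc]

/-- ordered monomial in the X generators along a list of indices -/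
def xmOn : List (Fin n) → I n N → WeylAlg n N q
  | [], _ => 1
  | i :: t, a => xw n N q i ^ (a i).val * xmOn t a

def ymOn : List (Fin n) → I n N → WeylAlg n N q
  | [], _ => 1
  | i :: t, a => yw n N q i ^ (a i).val * ymOn t a

lemma xmOn_congr (l : List (Fin n)) (a b : I n N) (h : ∀ i ∈ l, a i = b i) :
    xmOn n N q l a = xmOn n N q l b := by
  induction l with
  | nil => rfl
  | cons j t ih =>
    rw [xmOn, xmOn, h j List.mem_cons_self, ih (fun i hi => h i (List.mem_cons_of_mem j hi))]

lemma ymOn_congr (l : List (Fin n)) (a b : I n N) (h : ∀ i ∈ l, a i = b i) :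
    ymOn n N q l a = ymOn n N q l b := by
  induction l with
  | nil => rfl
  | cons j t ih =>
    rw [ymOn, ymOn, h j List.mem_cons_self, ih (fun i hi => h i (List.mem_cons_of_mem j hi))]

lemma commute_x_xmOn (i : Fin n) (l : List (Fin n)) (a : I n N) :
    Commute (xw n N q i) (xmOn n N q l a) := by
  induction l with
  | nil => exact Commute.one_right _
  | cons j t ih => exact Commute.mul_right ((Commute.pow_right (rXX n N q i j) _)) ih

lemma commute_x_ymOn (i : Fin n) (l : List (Fin n)) (hi : i ∉ l) (a : I n N) :
    Commute (xw n N q i) (ymOn n N q l a) := by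
  induction l with
  | nil => exact Commute.one_right _
  | cons j t ih =>
    have hij : i ≠ j := fun h => hi (h ▸ (List.mem_cons_self : j ∈ j :: t))
    exact Commute.mul_right (Commute.pow_right (rXYne n N q i j hij) _)
      (ih fun h => hi (List.mem_cons_of_mem j h))

lemma x_mul_xmOn (i : Fin n) (l : List (Fin n)) (hl : l.Nodup) (hi : i ∈ l) (a : I n N) :
    xw n N q i * xmOn n N q l a = xmOn n N q l (Function.update a i (a i + 1)) := by
  induction l with
  | nil => exact absurd hi List.not_mem_nil
  | cons j t ih =>
    rw [List.nodup_cons] at hl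
    rcases eq_or_ne i j with rfl | hij
    · rw [xmOn, xmOn, ← mul_assoc, ← pow_succ']
      have hval : (Function.update a i (a i + 1) i) = a i + 1 := Function.update_self i _ a
      rw [hval]
      have h2 : (a i + 1).val = ((a i).val + 1) % N := by
        rw [ZMod.val_add, ZMod.val_one_eq_one_mod, Nat.add_mod_mod]
      rw [h2, xw_pow_mod]
      congr 1
      exact (xmOn_congr n N q t _ a fun k hk =>
        Function.update_of_ne (by rintro rfl; exact hl.1 hk) _ a).symm
    · rw [xmOn, xmOn, ← mul_assoc, (Commute.pow_right (rXX n N q i j) _).eq, mul_assoc,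
        ih hl.2 ((List.mem_cons.mp hi).resolve_left hij)]
      congr 1
      exact (Function.update_of_ne (Ne.symm hij) _ a) ▸ rfl

lemma y_mul_ymOn (i : Fin n) (l : List (Fin n)) (hl : l.Nodup) (hi : i ∈ l) (a : I n N) :
    yw n N q i * ymOn n N q l a = ymOn n N q l (Function.update a i (a i + 1)) := by
  induction l with
  | nil => exact absurd hi List.not_mem_nil
  | cons j t ih =>
    rw [List.nodup_cons] at hl
    rcases eq_or_ne i j with rfl | hij
    · rw [ymOn, ymOn, ← mul_assoc, ← pow_succ']
      have hval : (Function.update a i (a i + 1) i) = a i + 1 := Function.update_self i _ a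
      rw [hval]
      have h2 : (a i + 1).val = ((a i).val + 1) % N := by
        rw [ZMod.val_add, ZMod.val_one_eq_one_mod, Nat.add_mod_mod]
      rw [h2, yw_pow_mod]
      congr 1
      exact (ymOn_congr n N q t _ a fun k hk =>
        Function.update_of_ne (by rintro rfl; exact hl.1 hk) _ a).symm
    · rw [ymOn, ymOn, ← mul_assoc, (Commute.pow_right (rYY n N q i j) _).eq, mul_assoc,
        ih hl.2 ((List.mem_cons.mp hi).resolve_left hij)]
      congr 1
      exact (Function.update_of_ne (Ne.symm hij) _ a) ▸ rfl

lemma x_mul_ymOn (i : Fin n) (l : List (Fin n)) (hl : l.Nodup) (hi : i ∈ l) (b : I n N) :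
    xw n N q i * ymOn n N q l b =
      (q⁻¹) ^ (b i).val • (ymOn n N q l b * xw n N q i) := by
  induction l with
  | nil => exact absurd hi List.not_mem_nil
  | cons j t ih =>
    rw [List.nodup_cons] at hl
    rcases eq_or_ne i j with rfl | hij
    · rw [ymOn, ← mul_assoc, x_ypow, smul_mul_assoc, mul_assoc,
        (commute_x_ymOn n N q i t hl.1 b).eq, ← mul_assoc]
    · rw [ymOn, ← mul_assoc, (Commute.pow_right (rXYne n N q i j hij) _).eq, mul_assoc,
        ih hl.2 ((List.mem_cons.mp hi).resolve_left hij), mul_smul_comm, ← mul_assoc]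

end Helpers

section Helpers
open Stmt2Aux

variable (n N : ℕ) [NeZero N] (q : ℂ) (hq : IsPrimitiveRoot q N)

def xm (a : I n N) : WeylAlg n N q := xmOn n N q (List.finRange n) a
def ym (b : I n N) : WeylAlg n N q := ymOn n N q (List.finRange n) b

lemma xw_mul_xm (i : Fin n) (a : I n N) :
    xw n N q i * xm n N q a = xm n N q (Function.update a i (a i + 1)) :=
  x_mul_xmOn n N q i _ (List.nodup_finRange n) (List.mem_finRange i) a

lemma yw_mul_ym (i : Fin n) (b : I n N) :
    yw n N q i * ym n N q b = ym n N q (Function.update b i (b i + 1)) :=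
  y_mul_ymOn n N q i _ (List.nodup_finRange n) (List.mem_finRange i) b

lemma xw_mul_ym (i : Fin n) (b : I n N) :
    xw n N q i * ym n N q b = (q⁻¹) ^ (b i).val • (ym n N q b * xw n N q i) :=
  x_mul_ymOn n N q i _ (List.nodup_finRange n) (List.mem_finRange i) b

lemma xmOn_zero (l : List (Fin n)) : xmOn n N q l 0 = 1 := by
  induction l with
  | nil => rfl
  | cons j t ih => rw [xmOn, ih, Pi.zero_apply, ZMod.val_zero, pow_zero, one_mul]

lemma ymOn_zero (l : List (Fin n)) : ymOn n N q l 0 = 1 := by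
  induction l with
  | nil => rfl
  | cons j t ih => rw [ymOn, ih, Pi.zero_apply, ZMod.val_zero, pow_zero, one_mul]

/-- the spanning family of monomials -/
def gmon (p : I n N × I n N) : WeylAlg n N q := ym n N q p.2 * xm n N q p.1

lemma one_mem_span : (1 : WeylAlg n N q) ∈ Submodule.span ℂ (Set.range (gmon n N q)) := by
  have h : gmon n N q (0, 0) = 1 := by
    rw [gmon, ym, xm, xmOn_zero, ymOn_zero, one_mul]
  exact h ▸ Submodule.subset_span ⟨(0,0), rfl⟩

lemma xw_mul_mem_span (i : Fin n) (v : WeylAlg n N q)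
    (hv : v ∈ Submodule.span ℂ (Set.range (gmon n N q))) :
    xw n N q i * v ∈ Submodule.span ℂ (Set.range (gmon n N q)) := by
  induction hv using Submodule.span_induction with
  | mem v hv =>
    obtain ⟨⟨a, b⟩, rfl⟩ := hv
    rw [gmon, ← mul_assoc, xw_mul_ym, smul_mul_assoc, mul_assoc, xw_mul_xm]
    exact Submodule.smul_mem _ _ (Submodule.subset_span ⟨(Function.update a i (a i + 1), b), rfl⟩)
  | zero => rw [mul_zero]; exact Submodule.zero_mem _
  | add x y hx hy ihx ihy => rw [mul_add]; exact Submodule.add_mem _ ihx ihy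
  | smul c x hx ihx => rw [mul_smul_comm]; exact Submodule.smul_mem _ _ ihx

lemma yw_mul_mem_span (i : Fin n) (v : WeylAlg n N q)
    (hv : v ∈ Submodule.span ℂ (Set.range (gmon n N q))) :
    yw n N q i * v ∈ Submodule.span ℂ (Set.range (gmon n N q)) := by
  induction hv using Submodule.span_induction with
  | mem v hv =>
    obtain ⟨⟨a, b⟩, rfl⟩ := hv
    rw [gmon, ← mul_assoc, yw_mul_ym]
    exact Submodule.subset_span ⟨(a, _), rfl⟩
  | zero => rw [mul_zero]; exact Submodule.zero_mem _
  | add x y hx hy ihx ihy => rw [mul_add]; exact Submodule.add_mem _ ihx ihy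
  | smul c x hx ihx => rw [mul_smul_comm]; exact Submodule.smul_mem _ _ ihx

lemma adjoin_gens :
    Algebra.adjoin ℂ (Set.range fun s : Fin n ⊕ Fin n =>
      RingQuot.mkAlgHom ℂ (Rel n N q) (FreeAlgebra.ι ℂ s)) = ⊤ := by
  have h1 : (Set.range fun s : Fin n ⊕ Fin n =>
      RingQuot.mkAlgHom ℂ (Rel n N q) (FreeAlgebra.ι ℂ s)) =
      RingQuot.mkAlgHom ℂ (Rel n N q) '' Set.range (FreeAlgebra.ι ℂ) := by
    rw [← Set.range_comp]; rfl
  rw [h1, ← AlgHom.map_adjoin, FreeAlgebra.adjoin_range_ι, Algebra.map_top,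
    AlgHom.range_eq_top]
  exact RingQuot.mkAlgHom_surjective ℂ _

lemma span_monomials_top :
    Submodule.span ℂ (Set.range (gmon n N q)) = ⊤ := by
  set T := Submodule.span ℂ (Set.range (gmon n N q)) with hT
  have key : ∀ z : WeylAlg n N q, ∀ v ∈ T, z * v ∈ T := by
    intro z
    have hz : z ∈ Algebra.adjoin ℂ (Set.range fun s : Fin n ⊕ Fin n =>
        RingQuot.mkAlgHom ℂ (Rel n N q) (FreeAlgebra.ι ℂ s)) := by
      rw [adjoin_gens]; trivial
    induction hz using Algebra.adjoin_induction with
    | mem x hx =>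
      obtain ⟨s, rfl⟩ := hx
      cases s with
      | inl i => exact fun v hv => xw_mul_mem_span n N q i v hv
      | inr i => exact fun v hv => yw_mul_mem_span n N q i v hv
    | algebraMap r =>
      intro v hv
      rw [← Algebra.smul_def]
      exact Submodule.smul_mem _ _ hv
    | add x y hx hy ihx ihy =>
      intro v hv
      rw [add_mul]
      exact Submodule.add_mem _ (ihx v hv) (ihy v hv)
    | mul x y hx hy ihx ihy =>
      intro v hv
      rw [mul_assoc]
      exact ihx _ (ihy v hv)
  rw [eq_top_iff]
  intro z _
  simpa using key z 1 (one_mem_span n N q)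

lemma finite_weyl : Module.Finite ℂ (WeylAlg n N q) := by
  classical
  refine ⟨⟨(Set.finite_range (gmon n N q)).toFinset, ?_⟩⟩
  rw [Set.Finite.coe_toFinset]
  exact span_monomials_top n N q

lemma finrank_weyl_le :
    Module.finrank ℂ (WeylAlg n N q) ≤ Fintype.card (I n N × I n N) := by
  classical
  have h1 : Module.finrank ℂ (WeylAlg n N q) =
      Module.finrank ℂ (Submodule.span ℂ (Set.range (gmon n N q))) := by
    rw [span_monomials_top, finrank_top]
  rw [h1]
  refine le_trans (finrank_span_le_card _) ?_
  rw [Set.toFinset_card]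
  exact Fintype.card_range_le _

lemma toEnd_bijective : Function.Bijective (toEnd n N q hq) := by
  haveI : Module.Finite ℂ (WeylAlg n N q) := finite_weyl n N q
  refine ⟨?_, toEnd_surjective n N q hq⟩
  have hsur := toEnd_surjective n N q hq
  have hEnd : Module.finrank ℂ (Module.End ℂ (V n N)) = Fintype.card (I n N × I n N) := by
    rw [Module.finrank_linearMap, Module.finrank_pi, Fintype.card_prod]
  have hge : Module.finrank ℂ (Module.End ℂ (V n N)) ≤ Module.finrank ℂ (WeylAlg n N q) := by
    have h2 := LinearMap.finrank_range_le (toEnd n N q hq).toLinearMap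
    have h3 : LinearMap.range (toEnd n N q hq).toLinearMap = ⊤ :=
      LinearMap.range_eq_top.mpr hsur
    rw [h3, finrank_top] at h2
    exact h2
  have heq : Module.finrank ℂ (WeylAlg n N q) = Module.finrank ℂ (Module.End ℂ (V n N)) :=
    le_antisymm (hEnd ▸ finrank_weyl_le n N q) hge
  have h4 := (LinearMap.injective_iff_surjective_of_finrank_eq_finrank
    (f := (toEnd n N q hq).toLinearMap) heq).mpr (by simpa using hsur)
  simpa using h4

/-- the algebra isomorphism -/
def weylEquiv : WeylAlg n N q ≃ₐ[ℂ] Module.End ℂ (V n N) :=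
  AlgEquiv.ofBijective (toEnd n N q hq) (toEnd_bijective n N q hq)

end Helpers

section Helpers
open Stmt2Aux

variable (n N : ℕ) [NeZero N] (q : ℂ) (hq : IsPrimitiveRoot q N)

/-- the basic rank-one projection -/
def pOp : Module.End ℂ (V n N) := rankOne n N (Pi.single 0 1) 0

lemma pOp_sandwich (f : Module.End ℂ (V n N)) :
    pOp n N * f * pOp n N = ((f (Pi.single 0 1)) 0) • pOp n N := by
  refine LinearMap.ext fun g => funext fun x => ?_
  rw [Module.End.mul_apply, Module.End.mul_apply, LinearMap.smul_apply]
  rw [pOp, rankOne_apply]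
  have h1 : (f (rankOne n N (Pi.single 0 1) 0 g)) = g 0 • f (Pi.single 0 1) := by
    have h2 : rankOne n N (Pi.single 0 1) 0 g = g 0 • (Pi.single 0 1 : V n N) := by
      funext y
      rw [rankOne_apply]
      rfl
    rw [h2, map_smul]
  rw [h1]
  simp only [Pi.smul_apply, smul_eq_mul, rankOne_apply]
  ring

/-- resolution of the identity -/
lemma sum_conj_pOp :
    ∑ b : I n N, shiftOp n N (-b) * pOp n N * shiftOp n N b = 1 := by
  refine LinearMap.ext fun f => funext fun x => ?_
  rw [LinearMap.sum_apply, Finset.sum_apply]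
  have h1 : ∀ b : I n N,
      (shiftOp n N (-b) * pOp n N * shiftOp n N b) f x
        = (if x = b then 1 else 0) * f b := by
    intro b
    rw [Module.End.mul_apply, Module.End.mul_apply, shiftOp_apply, pOp, rankOne_apply,
      shiftOp_apply, Pi.single_apply, zero_add]
    rcases eq_or_ne x b with rfl | h
    · rw [if_pos (by abel), if_pos rfl, mul_comm]
    · rw [if_neg, if_neg h, zero_mul, mul_zero]
      intro hc
      exact h (by
        have h3 := congrArg (fun z => z + b) hc
        simpa using h3)
  rw [Finset.sum_congr rfl fun b _ => h1 b]
  simp [Finset.sum_ite_eq]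

variable (M₁ : Type) [AddCommGroup M₁] [Module (WeylAlg n N q) M₁]
  [IsSimpleModule (WeylAlg n N q) M₁]

/-- the projection hits every simple module -/
lemma exists_p_smul_ne_zero :
    ∃ m : M₁, (weylEquiv n N q hq).symm (pOp n N) • m ≠ 0 := by
  have hnt : Nontrivial M₁ := IsSimpleModule.nontrivial (WeylAlg n N q) M₁
  obtain ⟨m0, hm0⟩ := exists_ne (0 : M₁)
  by_contra hc
  push_neg at hc
  apply hm0
  set e := weylEquiv n N q hq with he
  have h1 : (1 : WeylAlg n N q)
      = ∑ b : I n N, e.symm (shiftOp n N (-b) * pOp n N * shiftOp n N b) := by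
    rw [← map_sum, sum_conj_pOp, map_one]
  calc m0 = (1 : WeylAlg n N q) • m0 := (one_smul _ _).symm
    _ = ∑ b : I n N, e.symm (shiftOp n N (-b) * pOp n N * shiftOp n N b) • m0 := by
        rw [h1, Finset.sum_smul]
    _ = 0 := by
        refine Finset.sum_eq_zero fun b _ => ?_
        rw [map_mul, map_mul, mul_smul, mul_smul, hc (e.symm (shiftOp n N b) • m0), smul_zero]

variable (M₂ : Type) [AddCommGroup M₂] [Module (WeylAlg n N q) M₂]
  [IsSimpleModule (WeylAlg n N q) M₂]

include hq in
lemma simple_iso : Nonempty (M₁ ≃ₗ[WeylAlg n N q] M₂) := by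
  set e := weylEquiv n N q hq with he
  set pw : WeylAlg n N q := e.symm (pOp n N) with hpw
  have pap : ∀ aa : WeylAlg n N q,
      pw * aa * pw = (((e aa) (Pi.single 0 1)) 0) • pw := by
    intro aa
    refine e.injective ?_
    rw [map_smul, map_mul, map_mul, hpw, AlgEquiv.apply_symm_apply]
    exact pOp_sandwich n N (e aa)
  have ppw : pw * pw = pw := by
    have h1 := pap 1
    rw [mul_one, map_one] at h1
    rw [h1, Module.End.one_apply, Pi.single_eq_same, one_smul]
  obtain ⟨m1, hm1⟩ := exists_p_smul_ne_zero n N q hq M₁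
  obtain ⟨m2, hm2⟩ := exists_p_smul_ne_zero n N q hq M₂
  set u1 : M₁ := pw • m1 with hu1
  set u2 : M₂ := pw • m2 with hu2
  have unit_smul : ∀ (M₀ : Type) (_ : AddCommGroup M₀), ∀ (_ : Module (WeylAlg n N q) M₀),
      ∀ (c : ℂ) (x : M₀), c ≠ 0 → (algebraMap ℂ (WeylAlg n N q) c) • x = 0 → x = 0 := by
    intro M₀ _ _ c x hcne hx
    have hu : IsUnit (algebraMap ℂ (WeylAlg n N q) c) :=
      (IsUnit.mk0 c hcne).map (algebraMap ℂ (WeylAlg n N q))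
    obtain ⟨u, hu⟩ := hu
    calc x = ((↑u⁻¹ * ↑u : WeylAlg n N q)) • x := by rw [u.inv_mul, one_smul]
      _ = (↑u⁻¹ : WeylAlg n N q) • ((↑u : WeylAlg n N q) • x) := mul_smul _ _ _
      _ = 0 := by rw [hu, hx, smul_zero]
  have hker : ∀ a : WeylAlg n N q, a • u1 = 0 → a • u2 = 0 := by
    intro a h1
    by_contra h2
    have hc0 : ∀ a' : WeylAlg n N q, (((e (a' * a)) (Pi.single 0 1)) 0) = 0 := by
      intro a'
      by_contra hcne
      refine hm1 (unit_smul M₁ ‹_› ‹_› _ u1 hcne ?_)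
      have h3 : (pw * (a' * a) * pw) • m1
          = (algebraMap ℂ (WeylAlg n N q) (((e (a' * a)) (Pi.single 0 1)) 0)) • u1 := by
        rw [pap (a' * a), Algebra.smul_def, mul_smul, hu1]
      have h4 : (pw * (a' * a) * pw) • m1 = 0 := by
        simp only [mul_smul]
        rw [← hu1, h1, smul_zero, smul_zero]
      rw [← h3, h4]
    have h5 : Function.Surjective (LinearMap.toSpanSingleton (WeylAlg n N q) M₂ (a • u2)) :=
      IsSimpleModule.toSpanSingleton_surjective (WeylAlg n N q) h2
    obtain ⟨a'', ha''⟩ := h5 u2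
    rw [LinearMap.toSpanSingleton_apply] at ha''
    have h7 : (pw * (a'' * a) * pw) • m2 = pw • u2 := by
      simp only [mul_smul]
      rw [← hu2, ha'']
    have h8 : pw • u2 = u2 := by rw [hu2, ← mul_smul, ppw]
    refine hm2 ?_
    rw [← h8, ← h7, pap (a'' * a), hc0 a'', zero_smul, zero_smul]
  -- construct the nonzero hom
  have hu1ne : u1 ≠ 0 := hm1
  let α1 := LinearMap.toSpanSingleton (WeylAlg n N q) M₁ u1
  let α2 := LinearMap.toSpanSingleton (WeylAlg n N q) M₂ u2
  have hs1 : Function.Surjective α1 :=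
    IsSimpleModule.toSpanSingleton_surjective (WeylAlg n N q) hu1ne
  have hkle : LinearMap.ker α1 ≤ LinearMap.ker α2 := by
    intro a ha
    rw [LinearMap.mem_ker] at ha ⊢
    rw [LinearMap.toSpanSingleton_apply] at ha ⊢
    exact hker a ha
  let β := Submodule.liftQ (LinearMap.ker α1) α2 hkle
  let eq1 := LinearMap.quotKerEquivOfSurjective α1 hs1
  let θ : M₁ →ₗ[WeylAlg n N q] M₂ := β.comp (eq1.symm : M₁ →ₗ[WeylAlg n N q] _)
  have hθ : θ ≠ 0 := by
    intro h0
    have hβ : ∀ x, β x = 0 := by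
      intro x
      have h9 : β x = θ (eq1 x) := by
        show β x = β (eq1.symm (eq1 x))
        rw [LinearEquiv.symm_apply_apply]
      rw [h9, h0, LinearMap.zero_apply]
    have h10 := hβ (Submodule.Quotient.mk 1)
    rw [Submodule.liftQ_apply, LinearMap.toSpanSingleton_apply, one_smul] at h10
    exact hm2 h10
  exact ⟨LinearEquiv.ofBijective θ (LinearMap.bijective_of_ne_zero hθ)⟩

end Helpers

open Stmt2Aux

/-- every nonzero simple left `A_{n,q}`-module has ℂ-dimension `N^n`, and
any two nonzero simple left `A_{n,q}`-modules are isomorphic. -/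
theorem stmt_2 (n N : ℕ) (hn : 1 ≤ n) (hN : 1 ≤ N) (q : ℂ) (hq : IsPrimitiveRoot q N)
    (M : Type) [AddCommGroup M] [Module (WeylAlg n N q) M]
    [Module ℂ M] [IsScalarTower ℂ (WeylAlg n N q) M] [IsSimpleModule (WeylAlg n N q) M]
    (M' : Type) [AddCommGroup M'] [Module (WeylAlg n N q) M']
    [IsSimpleModule (WeylAlg n N q) M'] :
    Module.finrank ℂ M = N ^ n ∧ Nonempty (M ≃ₗ[WeylAlg n N q] M') := by
  haveI : NeZero N := ⟨Nat.one_le_iff_ne_zero.mp hN⟩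
  set e := weylEquiv n N q hq with he
  letI : Module (WeylAlg n N q) (V n N) :=
    Module.compHom (V n N) (e.toAlgHom.toRingHom)
  have smul_def : ∀ (a : WeylAlg n N q) (v : V n N), a • v = e a v := fun a v => rfl
  haveI : Nontrivial (V n N) := inferInstance
  haveI hVsimple : IsSimpleModule (WeylAlg n N q) (V n N) := by
    refine (isSimpleModule_iff ..).mpr ⟨fun W => ?_⟩
    rcases eq_or_ne W ⊥ with h | h
    · exact Or.inl h
    refine Or.inr ?_
    obtain ⟨w, hwW, hw0⟩ := Submodule.ne_bot_iff W |>.mp h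
    rw [eq_top_iff]
    intro v _
    obtain ⟨a0, ha0⟩ := Function.ne_iff.mp hw0
    let f : Module.End ℂ (V n N) :=
      ((w a0)⁻¹ • (LinearMap.proj a0 : V n N →ₗ[ℂ] ℂ)).smulRight v
    have hf : f w = v := by
      show ((w a0)⁻¹ • (LinearMap.proj a0 : V n N →ₗ[ℂ] ℂ)) w • v = v
      rw [LinearMap.smul_apply, LinearMap.proj_apply, smul_eq_mul,
        inv_mul_cancel₀ ha0, one_smul]
    have hsm : e.symm f • w = v := by
      rw [smul_def, AlgEquiv.apply_symm_apply, hf]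
    exact hsm ▸ W.smul_mem _ hwW
  obtain ⟨g1⟩ := simple_iso n N q hq (V n N) M
  obtain ⟨g2⟩ := simple_iso n N q hq (V n N) M'
  constructor
  · -- finrank
    have key : ∀ (c : ℂ) (v : V n N), (algebraMap ℂ (WeylAlg n N q) c) • v = c • v := by
      intro c v
      rw [smul_def, AlgEquiv.commutes, Module.algebraMap_end_apply]
    have hsmul : ∀ (c : ℂ) (v : V n N), g1 (c • v) = c • g1 v := by
      intro c v
      rw [← key, map_smul, Algebra.algebraMap_eq_smul_one, smul_assoc, one_smul]
    let gc : V n N ≃ₗ[ℂ] M :=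
      { toFun := g1
        map_add' := fun a b => map_add g1 a b
        map_smul' := hsmul
        invFun := g1.symm
        left_inv := fun v => g1.symm_apply_apply v
        right_inv := fun m => g1.apply_symm_apply m }
    rw [← gc.finrank_eq, Module.finrank_pi, Fintype.card_fun, ZMod.card, Fintype.card_fin]
  · exact ⟨g1.symm.trans g2⟩

end Stmt2
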